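/- arXiv:2010.14075 — 5 statements merged into one kernel-verified Lean document; each statement's English description precedes it below -/
import Mathlib

section
/- Let K be a positive integer and θ_1,...,θ_K ∈ {0,1}. Define a = Σ_{j=1}^{K} 2^{-j-1}·θ_j. Then a ∈ [0, 1/2), and for every k ∈ {1,...,K}, σ₃(2^k · a) = θ_k, where σ₃(x) = 1 if x − ⌊x⌋ ≥ 1/2 and 0 otherwise. -/
/-- σ₃(x) = 1 if the fractional part of x is ≥ 1/2, else 0. -/
noncomputable def sigma3 (x : ℝ) : ℝ := if (1:ℝ)/2 ≤ Int.fract x then 1 else 0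

lemma geom_tail_eq (k K : ℕ) (hkK' : k ≤ K) :
    (∑ j ∈ Finset.Ioc k K, (2:ℝ) ^ ((k:ℤ) - (j:ℤ) - 1)) = 1/2 - 2 ^ ((k:ℤ) - (K:ℤ) - 1) := by
  induction K, hkK' using Nat.le_induction with
  | base =>
      simp
  | succ K hkK ih =>
      rw [Finset.sum_Ioc_succ_top hkK, ih]
      have h1 : ((k:ℤ) - (K:ℤ) - 1) = ((k:ℤ) - ((K:ℕ)+1:ℕ) - 1) + 1 := by push_cast; ring
      have h2 : ((k:ℤ) - (((K:ℕ)+1:ℕ):ℤ) - 1) = ((k:ℤ) - ((K:ℕ)+1:ℕ) - 1) := by push_cast; ring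
      rw [h1, h2, zpow_add₀ (by norm_num : (2:ℝ) ≠ 0)]
      ring

lemma tail_mem (θ : ℕ → ℝ) (hθ : ∀ j, θ j = 0 ∨ θ j = 1) (k K : ℕ) :
    (∑ j ∈ Finset.Ioc k K, (2:ℝ) ^ ((k:ℤ) - (j:ℤ) - 1) * θ j) ∈ Set.Ico (0:ℝ) (1/2) := by
  have hnn : ∀ j, 0 ≤ θ j := fun j => by rcases hθ j with h | h <;> rw [h] <;> norm_num
  have hle : ∀ j, θ j ≤ 1 := fun j => by rcases hθ j with h | h <;> rw [h] <;> norm_num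
  constructor
  · exact Finset.sum_nonneg fun j _ => mul_nonneg (by positivity) (hnn j)
  · have hbd : (∑ j ∈ Finset.Ioc k K, (2:ℝ) ^ ((k:ℤ) - (j:ℤ) - 1) * θ j)
        ≤ ∑ j ∈ Finset.Ioc k K, (2:ℝ) ^ ((k:ℤ) - (j:ℤ) - 1) := by
      apply Finset.sum_le_sum
      intro j _
      calc (2:ℝ) ^ ((k:ℤ) - (j:ℤ) - 1) * θ j ≤ (2:ℝ) ^ ((k:ℤ) - (j:ℤ) - 1) * 1 :=
            mul_le_mul_of_nonneg_left (hle j) (by positivity)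
        _ = _ := mul_one _
    rcases le_or_gt k K with h | h
    · calc _ ≤ _ := hbd
        _ = 1/2 - 2 ^ ((k:ℤ) - (K:ℤ) - 1) := geom_tail_eq k K h
        _ < 1/2 := by have : (0:ℝ) < 2 ^ ((k:ℤ) - (K:ℤ) - 1) := by positivity
                      linarith
    · rw [Finset.Ioc_eq_empty (by omega)] at hbd ⊢
      simp at hbd ⊢

theorem stmt0 (K : ℕ) (hK : 0 < K) (θ : ℕ → ℝ)
    (hθ : ∀ j, θ j ∈ ({0, 1} : Set ℝ)) :
    (∑ j ∈ Finset.Icc 1 K, (2:ℝ) ^ (-(j:ℤ) - 1) * θ j) ∈ Set.Ico (0:ℝ) (1/2) ∧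
    ∀ k ∈ Finset.Icc 1 K,
      sigma3 ((2:ℝ) ^ k * ∑ j ∈ Finset.Icc 1 K, (2:ℝ) ^ (-(j:ℤ) - 1) * θ j) = θ k := by
  have hθ' : ∀ j, θ j = 0 ∨ θ j = 1 := fun j => hθ j
  constructor
  · have := tail_mem θ hθ' 0 K
    rw [show Finset.Icc 1 K = Finset.Ioc 0 K from rfl]
    simpa using this
  · intro k hk
    simp only [Finset.mem_Icc] at hk
    obtain ⟨hk1, hkK⟩ := hk
    -- rewrite the argument
    have harg : (2:ℝ) ^ k * ∑ j ∈ Finset.Icc 1 K, (2:ℝ) ^ (-(j:ℤ) - 1) * θ j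
        = ∑ j ∈ Finset.Icc 1 K, (2:ℝ) ^ ((k:ℤ) - (j:ℤ) - 1) * θ j := by
      rw [Finset.mul_sum]
      apply Finset.sum_congr rfl
      intro j _
      rw [← mul_assoc]
      congr 1
      rw [← zpow_natCast (2:ℝ) k, ← zpow_add₀ (by norm_num : (2:ℝ) ≠ 0)]
      congr 1
      ring
    rw [harg]
    -- split the sum
    obtain ⟨m, rfl⟩ : ∃ m, k = m + 1 := ⟨k - 1, by omega⟩
    have hIcc : Finset.Icc 1 K = Finset.Ioc 0 K := rfl
    have hsplit1 : Finset.Ioc 0 K = Finset.Ioc 0 m ∪ Finset.Ioc m K :=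
      (Finset.Ioc_union_Ioc_eq_Ioc (by omega) (by omega)).symm
    have hsplit2 : Finset.Ioc m K = Finset.Ioc m (m+1) ∪ Finset.Ioc (m+1) K :=
      (Finset.Ioc_union_Ioc_eq_Ioc (by omega) (by omega)).symm
    set f : ℕ → ℝ := fun j => (2:ℝ) ^ (((m+1:ℕ):ℤ) - (j:ℤ) - 1) * θ j with hf
    have hsum : ∑ j ∈ Finset.Icc 1 K, f j
        = (∑ j ∈ Finset.Ioc 0 m, f j) + f (m+1) + (∑ j ∈ Finset.Ioc (m+1) K, f j) := by
      rw [hIcc, hsplit1, Finset.sum_union (Finset.disjoint_left.mpr (by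
        intro x hx hy; simp only [Finset.mem_Ioc] at hx hy; omega)), hsplit2,
        Finset.sum_union (Finset.disjoint_left.mpr (by
        intro x hx hy; simp only [Finset.mem_Ioc] at hx hy; omega))]
      have : Finset.Ioc m (m+1) = {m+1} := by
        ext x; simp [Finset.mem_Ioc]
      rw [this, Finset.sum_singleton]
      ring
    rw [hsum]
    -- the first part is an integer
    obtain ⟨n, hn⟩ : ∃ n : ℤ, (∑ j ∈ Finset.Ioc 0 m, f j) = (n : ℝ) := by
      refine ⟨∑ j ∈ Finset.Ioc 0 m, 2 ^ (m - j) * (if θ j = 0 then 0 else 1), ?_⟩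
      push_cast
      apply Finset.sum_congr rfl
      intro j hj
      simp only [Finset.mem_Ioc] at hj
      have hexp : (((m+1:ℕ):ℤ) - (j:ℤ) - 1) = ((m - j : ℕ) : ℤ) := by
        push_cast [Nat.cast_sub hj.2]
        ring
      rcases hθ' j with h | h
      · simp [hf, h]
      · simp only [hf, h, if_neg (by norm_num : (1:ℝ) ≠ 0), mul_one]
        rw [hexp, zpow_natCast]
    have hfm : f (m+1) = θ (m+1) / 2 := by
      have : (((m+1:ℕ):ℤ) - ((m+1:ℕ):ℤ) - 1) = (-1 : ℤ) := by ring
      simp only [hf, this]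
      rw [zpow_neg_one]
      ring
    set C := ∑ j ∈ Finset.Ioc (m+1) K, f j with hC
    have hCmem : C ∈ Set.Ico (0:ℝ) (1/2) := tail_mem θ hθ' (m+1) K
    obtain ⟨hC0, hC2⟩ := hCmem
    rw [hn, hfm]
    have hfract : Int.fract ((n:ℝ) + θ (m+1)/2 + C) = θ (m+1)/2 + C := by
      rw [add_assoc, add_comm, Int.fract_add_intCast]
      apply Int.fract_eq_self.mpr
      constructor
      · rcases hθ' (m+1) with h | h <;> rw [h] <;> linarith
      · rcases hθ' (m+1) with h | h <;> rw [h] <;> linarith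
    unfold sigma3
    rw [hfract]
    rcases hθ' (m+1) with h | h <;> rw [h]
    · rw [if_neg (by linarith)]
    · rw [if_pos (by linarith)]
end

section
/- Let f : [0,1]^d → ℝ be continuous and let N be a positive integer. Then there exist a₁,...,a_N ∈ [0,1/2) such that the function φ(x) = 2ω_f(√d)·Σ_{j=1}^N 2^{-j} σ₃( a_j · 2^{ 1 + Σ_{i=1}^d 2^{(i−1)N} ⌊2^N x_i⌋ } ) + f(0) − ω_f(√d) satisfies |φ(x) − f(x)| ≤ 2ω_f(√d)·2^{-N} + ω_f(√d·2^{-N}) for all x ∈ [0,1)^d. -/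
/-- The unit cube [0,1]^d in Euclidean space. -/
def unitCube (d : ℕ) : Set (EuclideanSpace ℝ (Fin d)) := {x | ∀ i, x i ∈ Set.Icc (0:ℝ) 1}

/-- Modulus of continuity of f on [0,1]^d with respect to the Euclidean norm. -/
noncomputable def modCont (d : ℕ) (f : EuclideanSpace ℝ (Fin d) → ℝ) (r : ℝ) : ℝ :=
  sSup {t | ∃ x ∈ unitCube d, ∃ y ∈ unitCube d, ‖x - y‖ ≤ r ∧ t = |f x - f y|}

open Finset

section Aux

lemma aux_geom (n : ℕ) : ∑ u ∈ range n, ((1:ℝ)/2^(u+2)) = 1/2 - 1/2^(n+1) := by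
  induction n with
  | zero => norm_num
  | succ n ih =>
    rw [Finset.sum_range_succ, ih]
    have h1 : (2:ℝ)^(n+2) ≠ 0 := by positivity
    have h2 : (2:ℝ)^(n+1) ≠ 0 := by positivity
    field_simp
    ring

lemma aux_low_lt (B : ℕ) (m : ℕ → ℕ) (hm : ∀ i, m i < B) (n : ℕ) :
    (∑ i ∈ range n, m i * B^i) < B^n := by
  induction n with
  | zero => simp
  | succ n ih =>
    rw [Finset.sum_range_succ]
    calc (∑ i ∈ range n, m i * B^i) + m n * B^n < B^n + m n * B^n := by omega
    _ = (1 + m n) * B^n := by ring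
    _ ≤ B * B^n := Nat.mul_le_mul_right _ (by have := hm n; omega)
    _ = B^(n+1) := by ring

lemma aux_extract (B : ℕ) (hB : 0 < B) : ∀ (j n : ℕ) (m : ℕ → ℕ), (∀ i, m i < B) → j < n →
    (∑ i ∈ range n, m i * B^i) / B^j % B = m j := by
  intro j
  induction j with
  | zero =>
    intro n m hm hj
    obtain ⟨n', rfl⟩ : ∃ n', n = n' + 1 := ⟨n - 1, by omega⟩
    rw [Finset.sum_range_succ']
    simp only [pow_zero, Nat.div_one, mul_one]
    have : ∑ i ∈ range n', m (i+1) * B^(i+1) = B * ∑ i ∈ range n', m (i+1) * B^i := by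
      rw [Finset.mul_sum]; congr 1; ext i; ring
    rw [this, mul_comm B, Nat.mul_add_mod']
    exact Nat.mod_eq_of_lt (hm 0)
  | succ j ih =>
    intro n m hm hj
    obtain ⟨n', rfl⟩ : ∃ n', n = n' + 1 := ⟨n - 1, by omega⟩
    rw [Finset.sum_range_succ']
    have : ∑ i ∈ range n', m (i+1) * B^(i+1) + m 0 * B^0
        = m 0 + B * ∑ i ∈ range n', m (i+1) * B^i := by
      rw [Finset.mul_sum]
      simp only [pow_zero, mul_one]
      rw [add_comm]; congr 1; apply Finset.sum_congr rfl; intro i _; ring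
    rw [this, pow_succ, mul_comm (B^j) B, ← Nat.div_div_eq_div_mul]
    rw [Nat.add_mul_div_left _ _ hB, Nat.div_eq_of_lt (hm 0), zero_add]
    exact ih n' (fun i => m (i+1)) (fun i => hm (i+1)) (by omega)

lemma aux_bit_mem (u : ℝ) : ⌊2*u⌋ - 2*⌊u⌋ = 0 ∨ ⌊2*u⌋ - 2*⌊u⌋ = 1 := by
  have h1 : 2*⌊u⌋ ≤ ⌊2*u⌋ := by
    rw [Int.le_floor]; push_cast
    have := Int.floor_le u; linarith
  have h2 : ⌊2*u⌋ < 2*⌊u⌋ + 2 := by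
    rw [Int.floor_lt]; push_cast
    have := Int.lt_floor_add_one u; linarith
  omega

lemma aux_digit_sum (t : ℝ) (ht : 0 ≤ t) (ht1 : t < 1) (N : ℕ) :
    ∑ j ∈ Finset.Icc 1 N, (2:ℝ)^(-(j:ℤ)) * ((⌊t * 2^j⌋ - 2*⌊t * 2^(j-1)⌋ : ℤ) : ℝ)
      = (⌊t * 2^N⌋ : ℝ) / 2^N := by
  have h0 : ⌊t⌋ = 0 := Int.floor_eq_zero_iff.2 ⟨ht, ht1⟩
  rw [← Finset.Ico_add_one_right_eq_Icc, Finset.sum_Ico_eq_sum_range]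
  have : ∀ i ∈ Finset.range (N+1-1), (2:ℝ)^(-((1+i:ℕ):ℤ)) * ((⌊t * 2^(1+i)⌋ - 2*⌊t * 2^((1+i)-1)⌋ : ℤ) : ℝ)
      = (⌊t * 2^(i+1)⌋ : ℝ)/2^(i+1) - (⌊t * 2^i⌋ : ℝ)/2^i := by
    intro i _
    have e1 : (1+i) - 1 = i := by omega
    have e2 : 1 + i = i + 1 := by omega
    rw [e1, e2]
    have hz : (2:ℝ)^(-((i+1:ℕ):ℤ)) = 1/2^(i+1) := by
      rw [zpow_neg, zpow_natCast, one_div]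
    rw [hz]
    push_cast
    have h1 : (2:ℝ)^(i+1) ≠ 0 := by positivity
    have h2 : (2:ℝ)^i ≠ 0 := by positivity
    field_simp
    ring
  rw [Finset.sum_congr rfl this]
  have := Finset.sum_range_sub (fun i => (⌊t * 2^i⌋ : ℝ)/2^i) (N+1-1)
  rw [this]
  simp [h0, Nat.add_sub_cancel]

lemma aux_a_mem (M : ℕ) (b : ℕ → ℤ) (hb : ∀ k, b k = 0 ∨ b k = 1) :
    (∑ k' ∈ Finset.range M, (b k' : ℝ)/2^(k'+2)) ∈ Set.Ico (0:ℝ) (1/2) := by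
  have hb0 : ∀ k, (0:ℝ) ≤ (b k : ℝ) := by intro k; rcases hb k with h|h <;> simp [h]
  have hb1 : ∀ k, (b k : ℝ) ≤ 1 := by intro k; rcases hb k with h|h <;> simp [h]
  constructor
  · exact Finset.sum_nonneg fun k _ => div_nonneg (hb0 k) (by positivity)
  · calc ∑ k' ∈ Finset.range M, (b k' : ℝ)/2^(k'+2)
        ≤ ∑ k' ∈ Finset.range M, (1:ℝ)/2^(k'+2) := by
          apply Finset.sum_le_sum; intro k _
          gcongr
          exact hb1 k
    _ = 1/2 - 1/2^(M+1) := aux_geom M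
    _ < 1/2 := by
        have h0 : (0:ℝ) < 1/2^(M+1) := by positivity
        linarith

lemma aux_sigma3_extract (M : ℕ) (b : ℕ → ℤ) (hb : ∀ k, b k = 0 ∨ b k = 1)
    (k : ℕ) (hk : k < M) :
    sigma3 ((∑ k' ∈ Finset.range M, (b k' : ℝ)/2^(k'+2)) * 2^(1+k)) = (b k : ℝ) := by
  have hb0 : ∀ k, (0:ℝ) ≤ (b k : ℝ) := by intro k; rcases hb k with h|h <;> simp [h]
  have hb1 : ∀ k, (b k : ℝ) ≤ 1 := by intro k; rcases hb k with h|h <;> simp [h]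
  set n : ℤ := ∑ k' ∈ Finset.range k, b k' * 2^(k-1-k') with hn
  set tail : ℝ := ∑ k' ∈ Finset.Ico (k+1) M, (b k' : ℝ) * 2^(1+k)/2^(k'+2) with htail
  have htail0 : 0 ≤ tail := by
    apply Finset.sum_nonneg; intro k' _
    exact div_nonneg (mul_nonneg (hb0 k') (by positivity)) (by positivity)
  have htail_lt : tail < 1/2 := by
    rw [htail, Finset.sum_Ico_eq_sum_range]
    calc ∑ u ∈ range (M - (k+1)), (b (k+1+u) : ℝ) * 2^(1+k)/2^(k+1+u+2)
        ≤ ∑ u ∈ range (M - (k+1)), (1:ℝ)/2^(u+2) := by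
          apply Finset.sum_le_sum; intro u _
          calc (b (k+1+u) : ℝ) * 2^(1+k)/2^(k+1+u+2)
              ≤ 1 * 2^(1+k)/2^(k+1+u+2) := by gcongr; exact hb1 _
          _ = 1/2^(u+2) := by
              rw [one_mul, div_eq_div_iff (by positivity) (by positivity), one_mul, ← pow_add]
              congr 1
              omega
    _ = 1/2 - 1/2^(M-(k+1)+1) := aux_geom _
    _ < 1/2 := by
        have h0 : (0:ℝ) < 1/2^(M-(k+1)+1) := by positivity
        linarith
  have key : (∑ k' ∈ Finset.range M, (b k' : ℝ)/2^(k'+2)) * 2^(1+k)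
      = (n : ℝ) + ((b k : ℝ)/2 + tail) := by
    rw [Finset.sum_mul]
    rw [Finset.range_eq_Ico, ← Finset.sum_Ico_consecutive _ (Nat.zero_le k) (le_of_lt hk)]
    rw [Finset.sum_eq_sum_Ico_succ_bot hk]
    have e1 : ∑ k' ∈ Finset.Ico 0 k, (b k' : ℝ)/2^(k'+2) * 2^(1+k) = (n : ℝ) := by
      rw [hn]; push_cast
      rw [← Finset.range_eq_Ico]
      apply Finset.sum_congr rfl
      intro k' hk'
      rw [Finset.mem_range] at hk'
      rw [div_mul_eq_mul_div, mul_div_assoc, eq_comm, mul_comm ((b k':ℝ)) _, mul_comm ((b k':ℝ)) _]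
      congr 1
      rw [eq_div_iff (by positivity), ← pow_add]
      congr 1
      omega
    have e2 : (b k : ℝ)/2^(k+2) * 2^(1+k) = (b k : ℝ)/2 := by
      have h2 : (2:ℝ)^(k+2) = 2^(1+k) * 2 := by rw [← pow_succ]; congr 1; omega
      rw [h2]
      have h3 : (2:ℝ)^(1+k) ≠ 0 := by positivity
      field_simp
    have e3 : ∑ k' ∈ Finset.Ico (k+1) M, (b k' : ℝ)/2^(k'+2) * 2^(1+k) = tail := by
      rw [htail]; apply Finset.sum_congr rfl; intro k' _; ring
    rw [e1, e2, e3]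
  have hr0 : 0 ≤ (b k : ℝ)/2 + tail := by have := hb0 k; linarith
  have hr1 : (b k : ℝ)/2 + tail < 1 := by
    rcases hb k with h|h <;> rw [h] <;> push_cast <;> linarith
  have hfr : Int.fract ((∑ k' ∈ Finset.range M, (b k' : ℝ)/2^(k'+2)) * 2^(1+k))
      = (b k : ℝ)/2 + tail := by
    rw [key, Int.fract_intCast_add, Int.fract_eq_self.2 ⟨hr0, hr1⟩]
  rcases hb k with h|h
  · rw [sigma3, hfr, h]
    push_cast
    rw [if_neg (by norm_num; linarith)]
  · rw [sigma3, hfr, h]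
    push_cast
    rw [if_pos (by linarith)]

lemma unitCube_compact (d : ℕ) : IsCompact (unitCube d) := by
  have : unitCube d = (WithLp.toLp 2) '' Set.univ.pi (fun _ : Fin d => Set.Icc (0:ℝ) 1) := by
    ext x; constructor
    · intro hx; exact ⟨WithLp.ofLp x, Set.mem_univ_pi.2 hx, rfl⟩
    · rintro ⟨y, hy, rfl⟩; exact Set.mem_univ_pi.1 hy
  rw [this]
  exact (isCompact_univ_pi fun i => isCompact_Icc).image (PiLp.continuous_toLp 2 _)

lemma zero_mem_unitCube (d : ℕ) : (0 : EuclideanSpace ℝ (Fin d)) ∈ unitCube d := by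
  intro i
  simp [unitCube]

lemma modCont_bdd (d : ℕ) (f : EuclideanSpace ℝ (Fin d) → ℝ)
    (hf : ContinuousOn f (unitCube d)) (r : ℝ) :
    BddAbove {t | ∃ x ∈ unitCube d, ∃ y ∈ unitCube d, ‖x - y‖ ≤ r ∧ t = |f x - f y|} := by
  obtain ⟨C, hC⟩ := (unitCube_compact d).exists_bound_of_continuousOn hf
  refine ⟨2*C, ?_⟩
  rintro t ⟨x, hx, y, hy, -, rfl⟩
  have h1 := hC x hx
  have h2 := hC y hy
  rw [Real.norm_eq_abs] at h1 h2
  calc |f x - f y| ≤ |f x| + |f y| := abs_sub _ _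
  _ ≤ 2*C := by linarith

lemma abs_sub_le_modCont (d : ℕ) (f : EuclideanSpace ℝ (Fin d) → ℝ)
    (hf : ContinuousOn f (unitCube d)) (r : ℝ) {x y : EuclideanSpace ℝ (Fin d)}
    (hx : x ∈ unitCube d) (hy : y ∈ unitCube d) (hxy : ‖x - y‖ ≤ r) :
    |f x - f y| ≤ modCont d f r :=
  le_csSup (modCont_bdd d f hf r) ⟨x, hx, y, hy, hxy, rfl⟩

lemma modCont_nonneg (d : ℕ) (f : EuclideanSpace ℝ (Fin d) → ℝ)
    (hf : ContinuousOn f (unitCube d)) {r : ℝ} (hr : 0 ≤ r) :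
    0 ≤ modCont d f r := by
  have := abs_sub_le_modCont d f hf r (zero_mem_unitCube d) (zero_mem_unitCube d)
    (by simp [hr])
  simpa using le_trans (abs_nonneg _) this

lemma aux_norm_le (d : ℕ) (x y : EuclideanSpace ℝ (Fin d)) (s : ℝ) (hs : 0 ≤ s)
    (h : ∀ i, |x i - y i| ≤ s) : ‖x - y‖ ≤ Real.sqrt d * s := by
  rw [EuclideanSpace.norm_eq]
  have hb : ∀ i : Fin d, ‖(x - y) i‖^2 ≤ s^2 := by
    intro i
    have hxy : (x - y) i = x i - y i := rfl
    rw [hxy, Real.norm_eq_abs, sq_abs]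
    exact sq_le_sq' (by have := (abs_le.1 (h i)).1; linarith) (abs_le.1 (h i)).2
  calc Real.sqrt (∑ i, ‖(x-y) i‖^2) ≤ Real.sqrt (∑ _i : Fin d, s^2) :=
        Real.sqrt_le_sqrt (Finset.sum_le_sum fun i _ => hb i)
  _ = Real.sqrt (d * s^2) := by rw [Finset.sum_const]; simp [mul_comm]
  _ = Real.sqrt d * s := by
      rw [Real.sqrt_mul (by positivity), Real.sqrt_sq hs]

/-- corner of the dyadic cube with index k -/
noncomputable def crn (d N k : ℕ) : EuclideanSpace ℝ (Fin d) :=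
  WithLp.toLp 2 (fun (i : Fin d) => (((k / (2^N)^(i:ℕ)) % 2^N : ℕ) : ℝ) / ((2^N : ℕ) : ℝ))

lemma crn_mem (d N k : ℕ) : crn d N k ∈ unitCube d := by
  intro i
  have hBpos : 0 < 2^N := Nat.pow_pos (by norm_num)
  have hlt : (k / (2^N)^(i:ℕ)) % 2^N < 2^N := Nat.mod_lt _ hBpos
  constructor
  · have : (0:ℝ) ≤ (((k / (2^N)^(i:ℕ)) % 2^N : ℕ) : ℝ) / ((2^N : ℕ) : ℝ) := by positivity
    exact this
  · show (((k / (2^N)^(i:ℕ)) % 2^N : ℕ) : ℝ) / ((2^N : ℕ) : ℝ) ≤ 1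
    rw [div_le_one (by positivity)]
    exact_mod_cast le_of_lt hlt

/-- normalized clamped value at cube corner k -/
noncomputable def tval (d N : ℕ) (f : EuclideanSpace ℝ (Fin d) → ℝ) (k : ℕ) : ℝ :=
  min ((f (crn d N k) - f 0 + modCont d f (Real.sqrt d)) / (2 * modCont d f (Real.sqrt d)))
    (1 - 1/2^N)

noncomputable def bitZ (d N : ℕ) (f : EuclideanSpace ℝ (Fin d) → ℝ) (i k : ℕ) : ℤ :=
  ⌊tval d N f k * 2^(i+1)⌋ - 2*⌊tval d N f k * 2^i⌋

noncomputable def aval (d N : ℕ) (f : EuclideanSpace ℝ (Fin d) → ℝ) (j : ℕ) : ℝ :=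
  ∑ k' ∈ Finset.range ((2^N)^d), (bitZ d N f (j-1) k' : ℝ)/2^(k'+2)

lemma crn_norm_le (d N k : ℕ) : ‖crn d N k - 0‖ ≤ Real.sqrt d := by
  have := aux_norm_le d (crn d N k) 0 1 (by norm_num) (by
    intro i
    have h := crn_mem d N k i
    have h0 : (0 : EuclideanSpace ℝ (Fin d)) i = 0 := rfl
    rw [h0, sub_zero, abs_le]
    exact ⟨by linarith [h.1], h.2⟩)
  simpa using this

lemma tval_mem (d N : ℕ) (f : EuclideanSpace ℝ (Fin d) → ℝ)
    (hf : ContinuousOn f (unitCube d)) (hω : 0 < modCont d f (Real.sqrt d)) (k : ℕ) :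
    0 ≤ tval d N f k ∧ tval d N f k < 1 := by
  set ω := modCont d f (Real.sqrt d)
  have hfd : |f (crn d N k) - f 0| ≤ ω :=
    abs_sub_le_modCont d f hf _ (crn_mem d N k) (zero_mem_unitCube d) (crn_norm_le d N k)
  have h1 : (0:ℝ) ≤ (f (crn d N k) - f 0 + ω) / (2 * ω) := by
    apply div_nonneg _ (by linarith)
    have := (abs_le.1 hfd).1
    linarith
  have h2 : (0:ℝ) ≤ 1 - 1/2^N := by
    have : (1:ℝ)/2^N ≤ 1 := by
      rw [div_le_one (by positivity)]
      exact one_le_pow₀ (by norm_num)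
    linarith
  constructor
  · exact le_min h1 h2
  · have : tval d N f k ≤ 1 - 1/2^N := min_le_right _ _
    have hp : (0:ℝ) < 1/2^N := by positivity
    linarith

lemma bitZ_mem (d N : ℕ) (f : EuclideanSpace ℝ (Fin d) → ℝ)
    (hf : ContinuousOn f (unitCube d)) (hω : 0 < modCont d f (Real.sqrt d)) (i k : ℕ) :
    bitZ d N f i k = 0 ∨ bitZ d N f i k = 1 := by
  have h := aux_bit_mem (tval d N f k * 2^i)
  have e : 2 * (tval d N f k * 2^i) = tval d N f k * 2^(i+1) := by ring
  rw [e] at h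
  exact h

theorem stmt7 (d : ℕ) (hd : 0 < d) (f : EuclideanSpace ℝ (Fin d) → ℝ)
    (hf : ContinuousOn f (unitCube d)) (N : ℕ) (hN : 0 < N) :
    ∃ a : ℕ → ℝ, (∀ j, a j ∈ Set.Ico (0:ℝ) (1/2)) ∧
      ∀ x : EuclideanSpace ℝ (Fin d), (∀ i, x i ∈ Set.Ico (0:ℝ) 1) →
        |(2 * modCont d f (Real.sqrt d) *
            ∑ j ∈ Finset.Icc 1 N, (2:ℝ) ^ (-(j:ℤ)) *
              sigma3 (a j * (2:ℝ) ^
                (1 + ∑ i : Fin d, (2:ℤ) ^ ((i:ℕ) * N) * ⌊(2:ℝ) ^ N * x i⌋))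
          + f 0 - modCont d f (Real.sqrt d)) - f x|
        ≤ 2 * modCont d f (Real.sqrt d) * (2:ℝ) ^ (-(N:ℤ))
          + modCont d f (Real.sqrt d * (2:ℝ) ^ (-(N:ℤ))) := by
  have hpow : (2:ℝ)^(-(N:ℤ)) = 1/2^N := by rw [zpow_neg, zpow_natCast, one_div]
  have hω0 : 0 ≤ modCont d f (Real.sqrt d) := modCont_nonneg d f hf (Real.sqrt_nonneg _)
  have hω'0 : 0 ≤ modCont d f (Real.sqrt d * (2:ℝ)^(-(N:ℤ))) :=
    modCont_nonneg d f hf (by rw [hpow]; positivity)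
  by_cases hzero : modCont d f (Real.sqrt d) = 0
  · -- degenerate case: f is constant on the cube
    refine ⟨fun _ => 0, fun j => by norm_num, ?_⟩
    intro x hx
    have hxc : x ∈ unitCube d := fun i => ⟨(hx i).1, le_of_lt (hx i).2⟩
    have hdist : ‖(0:EuclideanSpace ℝ (Fin d)) - x‖ ≤ Real.sqrt d := by
      have := aux_norm_le d 0 x 1 (by norm_num) (by
        intro i
        have h := hx i
        have h0 : (0 : EuclideanSpace ℝ (Fin d)) i = 0 := rfl
        rw [h0, abs_le]
        constructor
        · linarith [h.2]
        · linarith [h.1])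
      simpa using this
    have hfx : |f 0 - f x| ≤ modCont d f (Real.sqrt d) :=
      abs_sub_le_modCont d f hf _ (zero_mem_unitCube d) hxc hdist
    rw [hzero] at hfx
    have hs0 : sigma3 0 = 0 := by rw [sigma3, Int.fract_zero, if_neg (by norm_num)]
    simp only [hzero, zero_mul, hs0, mul_zero, Finset.sum_const_zero, sub_zero, zero_add]
    linarith [hω'0]
  · have hωpos : 0 < modCont d f (Real.sqrt d) := lt_of_le_of_ne hω0 (Ne.symm hzero)
    have hbits : ∀ j, ∀ k, bitZ d N f j k = 0 ∨ bitZ d N f j k = 1 :=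
      fun j k => bitZ_mem d N f hf hωpos j k
    refine ⟨aval d N f, fun j => aux_a_mem _ _ (hbits (j-1)), ?_⟩
    intro x hx
    have hxc : x ∈ unitCube d := fun i => ⟨(hx i).1, le_of_lt (hx i).2⟩
    have hBpos : 0 < 2^N := Nat.pow_pos (by norm_num)
    have h2N : (0:ℝ) < 2^N := by positivity
    -- the digits of x
    set m : ℕ → ℕ := fun i => if h : i < d then (⌊(2:ℝ)^N * x ⟨i,h⟩⌋).toNat else 0 with hmdef
    have hfloor_nonneg : ∀ i : Fin d, 0 ≤ ⌊(2:ℝ)^N * x i⌋ := fun i =>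
      Int.floor_nonneg.2 (by have := (hx i).1; positivity)
    have hfloor_lt : ∀ i : Fin d, ⌊(2:ℝ)^N * x i⌋ < ((2^N : ℕ) : ℤ) := by
      intro i
      rw [Int.floor_lt]
      push_cast
      have h1 := (hx i).2
      nlinarith
    have hmlt : ∀ i, m i < 2^N := by
      intro i
      simp only [hmdef]
      by_cases h : i < d
      · rw [dif_pos h]
        have hlt := hfloor_lt ⟨i, h⟩
        have h0 := hfloor_nonneg ⟨i, h⟩
        omega
      · rw [dif_neg h]; exact hBpos
    set K : ℕ := ∑ i ∈ range d, m i * (2^N)^i with hKdef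
    have hKM : K < (2^N)^d := aux_low_lt (2^N) m hmlt d
    have hmi : ∀ i : Fin d, (m (i:ℕ) : ℤ) = ⌊(2:ℝ)^N * x i⌋ := by
      intro i
      rw [hmdef]
      simp only [dif_pos i.isLt, Fin.eta]
      rw [Int.toNat_of_nonneg (hfloor_nonneg i)]
    -- exponent identity
    have hE : (1 + ∑ i : Fin d, (2:ℤ)^((i:ℕ)*N)*⌊(2:ℝ)^N * x i⌋) = ((1 + K : ℕ) : ℤ) := by
      have h1 : ∀ i : Fin d, (2:ℤ)^((i:ℕ)*N)*⌊(2:ℝ)^N * x i⌋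
          = (fun j => ((m j : ℤ) * ((2^N : ℕ):ℤ)^j)) (i:ℕ) := by
        intro i
        simp only
        rw [← hmi i, mul_comm ((m (i:ℕ) : ℤ)) _]
        congr 1
        rw [mul_comm (i:ℕ) N, pow_mul]
        congr 1
      rw [Finset.sum_congr rfl (fun i _ => h1 i)]
      rw [Fin.sum_univ_eq_sum_range (fun j => ((m j : ℤ) * ((2^N:ℕ):ℤ)^j)) d]
      rw [hKdef]
      push_cast
      ring
    -- tval bounds
    obtain ⟨ht0, ht1⟩ := tval_mem d N f hf hωpos K
    -- rewrite the sigma3 sum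
    have hσ : ∀ j ∈ Finset.Icc 1 N,
        (2:ℝ)^(-(j:ℤ)) * sigma3 (aval d N f j * (2:ℝ)^
            (1 + ∑ i : Fin d, (2:ℤ)^((i:ℕ)*N)*⌊(2:ℝ)^N * x i⌋))
        = (2:ℝ)^(-(j:ℤ)) * ((⌊tval d N f K * 2^j⌋ - 2*⌊tval d N f K * 2^(j-1)⌋ : ℤ) : ℝ) := by
      intro j hj
      rw [Finset.mem_Icc] at hj
      congr 1
      rw [hE, zpow_natCast]
      have hext := aux_sigma3_extract ((2^N)^d) (bitZ d N f (j-1)) (hbits (j-1)) K hKM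
      rw [show aval d N f j
          = ∑ k' ∈ Finset.range ((2^N)^d), ((bitZ d N f (j-1) k' : ℤ):ℝ)/2^(k'+2) from rfl]
      rw [hext]
      have hj1 : (j-1)+1 = j := by omega
      rw [show bitZ d N f (j-1) K
          = ⌊tval d N f K * 2^((j-1)+1)⌋ - 2*⌊tval d N f K * 2^(j-1)⌋ from rfl, hj1]
    have hsum : ∑ j ∈ Finset.Icc 1 N, (2:ℝ)^(-(j:ℤ)) * sigma3 (aval d N f j * (2:ℝ)^
            (1 + ∑ i : Fin d, (2:ℤ)^((i:ℕ)*N)*⌊(2:ℝ)^N * x i⌋))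
        = (⌊tval d N f K * 2^N⌋ : ℝ)/2^N := by
      rw [Finset.sum_congr rfl hσ]
      exact aux_digit_sum _ ht0 ht1 N
    rw [hsum]
    set ω := modCont d f (Real.sqrt d) with hωdef
    set S := (⌊tval d N f K * 2^N⌋ : ℝ)/2^N with hSdef
    set uu := (f (crn d N K) - f 0 + ω) / (2*ω) with huudef
    have ht : tval d N f K = min uu (1 - 1/2^N) := rfl
    have hfd : |f (crn d N K) - f 0| ≤ ω :=
      abs_sub_le_modCont d f hf _ (crn_mem d N K) (zero_mem_unitCube d) (crn_norm_le d N K)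
    rw [abs_le] at hfd
    have huu0 : 0 ≤ uu := div_nonneg (by linarith [hfd.1]) (by linarith)
    have huu1 : uu ≤ 1 := by
      rw [huudef, div_le_one (by linarith)]
      linarith [hfd.2]
    have hfc : f (crn d N K) = 2*ω*uu + f 0 - ω := by
      rw [huudef]
      field_simp
      ring
    -- |S - uu| ≤ 1/2^N
    have hfl1 : ((⌊tval d N f K * 2^N⌋ : ℤ):ℝ) ≤ tval d N f K * 2^N := Int.floor_le _
    have hfl2 : tval d N f K * 2^N < ⌊tval d N f K * 2^N⌋ + 1 := Int.lt_floor_add_one _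
    have hSt : S ≤ tval d N f K := by
      rw [hSdef, div_le_iff₀ h2N]
      exact hfl1
    have htu : tval d N f K ≤ uu := by rw [ht]; exact min_le_left _ _
    have hS_le : S ≤ uu := le_trans hSt htu
    have hS_ge : uu - S ≤ 1/2^N := by
      rcases le_total uu (1 - 1/2^N) with hc|hc
      · have htu2 : tval d N f K = uu := by rw [ht]; exact min_eq_left hc
        have he : (tval d N f K - 1/2^N)*2^N = tval d N f K * 2^N - 1 := by
          field_simp
        have hlt : tval d N f K - 1/2^N < S := by
          rw [hSdef, lt_div_iff₀ h2N, he]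
          linarith
        linarith [htu2 ▸ hlt]
      · have htu2 : tval d N f K = 1 - 1/2^N := by rw [ht]; exact min_eq_right hc
        have he2 : tval d N f K * 2^N = ((2^N - 1 : ℤ) : ℝ) := by
          rw [htu2]
          push_cast
          field_simp
        have hS2 : S = 1 - 1/2^N := by
          rw [hSdef, he2, Int.floor_intCast]
          push_cast
          field_simp
        rw [hS2]
        linarith
    have h1 : |2*ω*S + f 0 - ω - f (crn d N K)| ≤ 2*ω*(1/2^N) := by
      rw [hfc]
      have he3 : 2*ω*S + f 0 - ω - (2*ω*uu + f 0 - ω) = 2*ω*(S - uu) := by ring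
      rw [he3, abs_mul, abs_of_nonneg (by linarith : (0:ℝ) ≤ 2*ω)]
      apply mul_le_mul_of_nonneg_left _ (by linarith : (0:ℝ) ≤ 2*ω)
      rw [abs_le]
      constructor <;> linarith
    -- distance from x to the corner
    have hcoord : ∀ i : Fin d, crn d N K i = ((⌊(2:ℝ)^N * x i⌋ : ℤ):ℝ)/2^N := by
      intro i
      have hxt : (K / (2^N)^(i:ℕ)) % 2^N = m (i:ℕ) :=
        aux_extract (2^N) hBpos (i:ℕ) d m hmlt i.isLt
      show (((K / (2^N)^(i:ℕ)) % 2^N : ℕ) : ℝ) / ((2^N : ℕ) : ℝ) = _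
      rw [hxt]
      rw [show ((m (i:ℕ) : ℕ):ℝ) = (((m (i:ℕ) : ℕ):ℤ):ℝ) by push_cast; ring, hmi i]
      push_cast
      ring
    have hdist2 : ‖x - crn d N K‖ ≤ Real.sqrt d * (2:ℝ)^(-(N:ℤ)) := by
      apply aux_norm_le d x (crn d N K) _ (by positivity)
      intro i
      rw [hcoord i, hpow]
      have e1 : ((⌊(2:ℝ)^N * x i⌋ : ℤ):ℝ) ≤ (2:ℝ)^N * x i := Int.floor_le _
      have e2 : (2:ℝ)^N * x i < ⌊(2:ℝ)^N * x i⌋ + 1 := Int.lt_floor_add_one _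
      have hcm : x i * 2^N = 2^N * x i := mul_comm _ _
      have hA : ((⌊(2:ℝ)^N * x i⌋ : ℤ):ℝ)/2^N ≤ x i := by
        rw [div_le_iff₀ h2N]
        linarith
      have hB : x i ≤ ((⌊(2:ℝ)^N * x i⌋ : ℤ):ℝ)/2^N + 1/2^N := by
        rw [← add_div, le_div_iff₀ h2N]
        linarith
      rw [abs_le]
      constructor
      · linarith
      · linarith
    have h2 : |f (crn d N K) - f x| ≤ modCont d f (Real.sqrt d * (2:ℝ)^(-(N:ℤ))) := by
      apply abs_sub_le_modCont d f hf _ (crn_mem d N K) hxc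
      rw [norm_sub_rev]
      exact hdist2
    calc |2 * ω * S + f 0 - ω - f x|
        = |(2*ω*S + f 0 - ω - f (crn d N K)) + (f (crn d N K) - f x)| := by
          congr 1
          ring
      _ ≤ |2*ω*S + f 0 - ω - f (crn d N K)| + |f (crn d N K) - f x| := abs_add_le _ _
      _ ≤ 2*ω*(1/2^N) + modCont d f (Real.sqrt d * (2:ℝ)^(-(N:ℤ))) := add_le_add h1 h2
      _ = 2*ω*(2:ℝ)^(-(N:ℤ)) + modCont d f (Real.sqrt d * (2:ℝ)^(-(N:ℤ))) := by rw [hpow]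
end Aux
end

section
/- Let f : [0,1]^d → ℝ be Hölder continuous of order α ∈ (0,1] with constant λ > 0, i.e., |f(x)−f(y)| ≤ λ‖x−y‖₂^α for all x,y ∈ [0,1]^d. Then for any positive integer N there exist a₁,...,a_N ∈ [0,1/2) such that the FLES network function φ (as in the main theorem) satisfies |φ(x) − f(x)| ≤ 3λ(2√d)^α · 2^{-αN} for all x ∈ [0,1]^d. -/
lemma aux_geom_s9 (T : Finset ℕ) : ∑ n ∈ T, ((1:ℝ)/2)^n < 2 := by
  have hsub : T ⊆ Finset.range ((T.sup id) + 1) := by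
    intro n hn
    simp only [Finset.mem_range]
    exact Nat.lt_succ_of_le (Finset.le_sup (f := id) hn)
  have h1 : ∑ n ∈ T, ((1:ℝ)/2)^n ≤ ∑ n ∈ Finset.range (T.sup id + 1), ((1:ℝ)/2)^n :=
    Finset.sum_le_sum_of_subset_of_nonneg hsub (by intros; positivity)
  have h2 : ∑ n ∈ Finset.range (T.sup id + 1), ((1:ℝ)/2)^n < 2 := by
    have := geom_sum_eq (by norm_num : ((1:ℝ)/2) ≠ 1) (T.sup id + 1)
    rw [this]
    have h : ((1:ℝ)/2)^(T.sup id + 1) > 0 := by positivity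
    rw [div_lt_iff_of_neg (by norm_num : ((1:ℝ)/2 - 1) < 0)]
    nlinarith
  linarith

lemma aux_zsum {ι : Type*} (S : Finset ι) (e : ι → ℤ) (hinj : Set.InjOn e S)
    (he : ∀ i ∈ S, 2 ≤ e i) (c : ι → ℝ) (hc0 : ∀ i ∈ S, 0 ≤ c i)
    (hc1 : ∀ i ∈ S, c i ≤ 1) : ∑ i ∈ S, c i * (2:ℝ)^(-(e i)) < 1/2 := by
  have step1 : ∑ i ∈ S, c i * (2:ℝ)^(-(e i)) ≤ ∑ i ∈ S, (2:ℝ)^(-(e i)) := by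
    apply Finset.sum_le_sum
    intro i hi
    have h2 : (0:ℝ) < (2:ℝ)^(-(e i)) := zpow_pos (by norm_num) _
    nlinarith [hc0 i hi, hc1 i hi]
  classical
  have step2 : ∑ i ∈ S, (2:ℝ)^(-(e i)) = ∑ p ∈ S.image e, (2:ℝ)^(-p) :=
    (Finset.sum_image (f := fun p : ℤ => (2:ℝ)^(-p)) (g := e)
      (fun x hx y hy h => hinj hx hy h)).symm
  have hinj2 : ∀ p ∈ S.image e, ∀ q ∈ S.image e, (p-2).toNat = (q-2).toNat → p = q := by
    intro p hp q hq h
    obtain ⟨i, hi, rfl⟩ := Finset.mem_image.1 hp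
    obtain ⟨j, hj, rfl⟩ := Finset.mem_image.1 hq
    have := he i hi; have := he j hj
    omega
  have step3 : ∑ p ∈ S.image e, (2:ℝ)^(-p)
      = (1/4) * ∑ n ∈ (S.image e).image (fun p => (p - 2).toNat), ((1:ℝ)/2)^n := by
    rw [Finset.sum_image (f := fun n : ℕ => ((1:ℝ)/2)^n) (g := fun p : ℤ => (p-2).toNat) hinj2,
      Finset.mul_sum]
    apply Finset.sum_congr rfl
    intro p hp
    obtain ⟨i, hi, rfl⟩ := Finset.mem_image.1 hp
    have h2 : 2 ≤ e i := he i hi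
    have hexp : (-(e i)) = -2 + (-(((e i - 2).toNat : ℤ))) := by
      rw [Int.toNat_of_nonneg (by omega)]; ring
    rw [hexp, zpow_add₀ (by norm_num : (2:ℝ) ≠ 0)]
    rw [zpow_neg (2:ℝ) (((e i - 2).toNat : ℤ)), zpow_natCast]
    norm_num [div_pow]
  have step4 := aux_geom_s9 ((S.image e).image (fun p => (p - 2).toNat))
  linarith

lemma aux_digits (s : ℕ) : ∀ n : ℕ, ∑ i ∈ Finset.range n, (s / 2^i % 2) * 2^i = s % 2^n := by
  intro n
  induction n with
  | zero => simp [Nat.mod_one]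
  | succ n ih =>
    rw [Finset.sum_range_succ, ih, pow_succ, Nat.mod_mul]
    ring

lemma aux_sum_bits (N s : ℕ) (hN : 0 < N) (hs : s < 2^N) :
    ∑ j ∈ Finset.Icc 1 N, (2:ℝ)^(-(j:ℤ)) * ((s / 2^(N-j) % 2 : ℕ) : ℝ)
      = (s : ℝ) / 2^N := by
  have key : ∑ j ∈ Finset.Icc 1 N, (2:ℝ)^(-(j:ℤ)) * ((s / 2^(N-j) % 2 : ℕ) : ℝ)
      = ∑ i ∈ Finset.range N, (2:ℝ)^(-((N-i:ℕ):ℤ)) * ((s / 2^i % 2 : ℕ) : ℝ) := by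
    apply Finset.sum_nbij' (fun j => N - j) (fun i => N - i)
    · intro j hj; simp only [Finset.mem_Icc] at hj; simp only [Finset.mem_range]; omega
    · intro i hi; simp only [Finset.mem_range] at hi; simp only [Finset.mem_Icc]; omega
    · intro j hj; simp only [Finset.mem_Icc] at hj; omega
    · intro i hi; simp only [Finset.mem_range] at hi; omega
    · intro j hj
      simp only [Finset.mem_Icc] at hj
      congr 2
      omega
  rw [key]
  have expand : ∀ i ∈ Finset.range N, (2:ℝ)^(-((N-i:ℕ):ℤ)) * ((s / 2^i % 2 : ℕ) : ℝ)
      = (((s / 2^i % 2) * 2^i : ℕ) : ℝ) / 2^N := by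
    intro i hi
    simp only [Finset.mem_range] at hi
    push_cast
    rw [zpow_neg, ← zpow_natCast (2:ℝ)]
    have hNi : ((N - i : ℕ) : ℤ) = (N:ℤ) - i := by omega
    rw [hNi]
    have h2 : (2:ℝ) ≠ 0 := by norm_num
    rw [zpow_sub₀ h2]
    field_simp
    rw [zpow_natCast]
    ring
  rw [Finset.sum_congr rfl expand, ← Finset.sum_div]
  congr 1
  rw [← Nat.cast_sum]
  rw [aux_digits s N, Nat.mod_eq_of_lt hs]

def auxM (d N : ℕ) (k : Fin d → Fin (2^(N-1)+1)) : ℕ := ∑ i, (k i : ℕ) * 2^((i:ℕ)*N)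

noncomputable def auxCorner (d N : ℕ) (k : Fin d → Fin (2^(N-1)+1)) :
    EuclideanSpace ℝ (Fin d) := (WithLp.equiv 2 _).symm (fun i => ((k i : ℕ) : ℝ) / 2^(N-1))

noncomputable def auxS (d N : ℕ) (f : EuclideanSpace ℝ (Fin d) → ℝ)
    (k : Fin d → Fin (2^(N-1)+1)) : ℕ :=
  min (⌊(2^N : ℝ) * ((f (auxCorner d N k) - f 0 + modCont d f (2 * Real.sqrt d)) /
    (2 * modCont d f (2 * Real.sqrt d)))⌋.toNat) (2^N - 1)

noncomputable def auxBit (d N : ℕ) (f : EuclideanSpace ℝ (Fin d) → ℝ) (j : ℕ)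
    (k : Fin d → Fin (2^(N-1)+1)) : ℕ := auxS d N f k / 2^(N-j) % 2

noncomputable def auxA (d N : ℕ) (f : EuclideanSpace ℝ (Fin d) → ℝ) (j : ℕ) : ℝ :=
  ∑ k : Fin d → Fin (2^(N-1)+1), (auxBit d N f j k : ℝ) * (2:ℝ)^(-(2 + (auxM d N k : ℤ)))

lemma auxM_inj (d N : ℕ) (hN : 0 < N) : Function.Injective (auxM d N) := by
  have hle : 2^(N-1)+1 ≤ 2^N := by
    have h1 : N - 1 + 1 = N := by omega
    calc 2^(N-1)+1 ≤ 2^(N-1)+2^(N-1) := by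
          have : 1 ≤ 2^(N-1) := Nat.one_le_two_pow
          omega
      _ = 2^(N-1+1) := by ring
      _ = 2^N := by rw [h1]
  intro k k' h
  have key : ∀ k : Fin d → Fin (2^(N-1)+1),
      auxM d N k = ((finFunctionFinEquiv (fun i => Fin.castLE hle (k i))) : ℕ) := by
    intro k
    rw [finFunctionFinEquiv_apply]
    unfold auxM
    apply Finset.sum_congr rfl
    intro i _
    rw [Fin.coe_castLE, ← pow_mul, Nat.mul_comm N (i:ℕ)]
  rw [key k, key k'] at h
  have h2 : (fun i => Fin.castLE hle (k i)) = (fun i => Fin.castLE hle (k' i)) :=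
    finFunctionFinEquiv.injective (Fin.val_injective h)
  funext i
  have := congrFun h2 i
  exact Fin.castLE_injective hle this

lemma aux_sigma3 (n b : ℕ) (hb : b ≤ 1) (B : ℝ) (hB0 : 0 ≤ B) (hB : B < 1/2) :
    sigma3 ((n:ℝ) + ((b:ℝ)/2 + B)) = (b:ℝ) := by
  unfold sigma3
  have hcast : ((n:ℝ)) = (((n:ℤ)):ℝ) := by push_cast; rfl
  rw [hcast, Int.fract_intCast_add]
  have hlt1 : (b:ℝ)/2 + B < 1 := by
    have : (b:ℝ) ≤ 1 := by exact_mod_cast hb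
    linarith
  rw [Int.fract_eq_self.2 ⟨by positivity, hlt1⟩]
  interval_cases b
  · simp only [Nat.cast_zero, zero_div, zero_add]
    rw [if_neg (by linarith)]
  · simp only [Nat.cast_one]
    rw [if_pos (by linarith)]

lemma auxBit_le (d N : ℕ) (f : EuclideanSpace ℝ (Fin d) → ℝ) (j : ℕ)
    (k : Fin d → Fin (2^(N-1)+1)) : auxBit d N f j k ≤ 1 := by
  unfold auxBit; omega

lemma auxA_mem (d N : ℕ) (hN : 0 < N) (f : EuclideanSpace ℝ (Fin d) → ℝ) (j : ℕ) :
    auxA d N f j ∈ Set.Ico (0:ℝ) (1/2) := by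
  constructor
  · apply Finset.sum_nonneg
    intro k _
    have : (0:ℝ) < (2:ℝ)^(-(2 + (auxM d N k : ℤ))) := zpow_pos (by norm_num) _
    positivity
  · unfold auxA
    apply aux_zsum _ (fun k => 2 + (auxM d N k : ℤ))
    · intro k _ k' _ h
      beta_reduce at h
      exact auxM_inj d N hN (by omega)
    · intro k _; omega
    · intro k _; positivity
    · intro k _
      exact_mod_cast auxBit_le d N f j k

lemma auxSigma (d N : ℕ) (hN : 0 < N) (f : EuclideanSpace ℝ (Fin d) → ℝ) (j : ℕ)
    (k₀ : Fin d → Fin (2^(N-1)+1)) :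
    sigma3 (auxA d N f j * (2:ℝ)^(1 + (auxM d N k₀ : ℤ))) = (auxBit d N f j k₀ : ℝ) := by
  classical
  set m₀ := auxM d N k₀ with hm₀
  set g : (Fin d → Fin (2^(N-1)+1)) → ℝ :=
    fun k => (auxBit d N f j k : ℝ) * (2:ℝ)^((m₀:ℤ) - 1 - (auxM d N k : ℤ)) with hg
  have hExpand : auxA d N f j * (2:ℝ)^(1 + (m₀ : ℤ)) = ∑ k, g k := by
    unfold auxA
    rw [Finset.sum_mul]
    apply Finset.sum_congr rfl
    intro k _
    rw [hg, mul_assoc, ← zpow_add₀ (by norm_num : (2:ℝ) ≠ 0)]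
    congr 2
    ring
  have hinj := auxM_inj d N hN
  set P := (Finset.univ.erase k₀).filter (fun k => auxM d N k < m₀) with hP
  set Q := (Finset.univ.erase k₀).filter (fun k => ¬ auxM d N k < m₀) with hQ
  have hsplit : ∑ k, g k = (∑ k ∈ P, g k + ∑ k ∈ Q, g k) + g k₀ := by
    rw [Finset.sum_filter_add_sum_filter_not]
    exact (Finset.sum_erase_add _ _ (Finset.mem_univ k₀)).symm
  -- integer part
  set nA : ℕ := ∑ k ∈ P, auxBit d N f j k * 2^(m₀ - 1 - auxM d N k) with hnA
  have hAint : ∑ k ∈ P, g k = (nA : ℝ) := by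
    rw [hnA, Nat.cast_sum]
    apply Finset.sum_congr rfl
    intro k hk
    have hklt : auxM d N k < m₀ := (Finset.mem_filter.1 hk).2
    have hexp : (m₀:ℤ) - 1 - (auxM d N k : ℤ) = ((m₀ - 1 - auxM d N k : ℕ) : ℤ) := by omega
    show (auxBit d N f j k : ℝ) * (2:ℝ)^((m₀:ℤ) - 1 - (auxM d N k : ℤ)) = _
    rw [hexp, zpow_natCast]
    push_cast
    ring
  -- tail
  have hB0 : 0 ≤ ∑ k ∈ Q, g k := by
    apply Finset.sum_nonneg
    intro k _
    have : (0:ℝ) < (2:ℝ)^((m₀:ℤ) - 1 - (auxM d N k : ℤ)) := zpow_pos (by norm_num) _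
    rw [hg]; positivity
  have hBlt : ∑ k ∈ Q, g k < 1/2 := by
    have := aux_zsum Q (fun k => (auxM d N k : ℤ) - m₀ + 1)
      (fun k hk k' hk' h => hinj (by beta_reduce at h; omega))
      (fun k hk => by
        have h1 : k ≠ k₀ := Finset.ne_of_mem_erase (Finset.mem_filter.1 hk).1
        have h2 : ¬ auxM d N k < m₀ := (Finset.mem_filter.1 hk).2
        have h3 : auxM d N k ≠ m₀ := fun h => h1 (hinj h)
        beta_reduce
        omega)
      (fun k => (auxBit d N f j k : ℝ))
      (fun k _ => by beta_reduce; positivity)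
      (fun k _ => by beta_reduce; exact_mod_cast auxBit_le d N f j k)
    calc ∑ k ∈ Q, g k = ∑ k ∈ Q, (auxBit d N f j k : ℝ) *
        (2:ℝ)^(-((auxM d N k : ℤ) - m₀ + 1)) := by
          apply Finset.sum_congr rfl
          intro k _
          show (auxBit d N f j k : ℝ) * (2:ℝ)^((m₀:ℤ) - 1 - (auxM d N k : ℤ)) = _
          congr 2
          ring
      _ < 1/2 := this
  -- k₀ term
  have hg0 : g k₀ = (auxBit d N f j k₀ : ℝ) / 2 := by
    show (auxBit d N f j k₀ : ℝ) * (2:ℝ)^((m₀:ℤ) - 1 - (auxM d N k₀ : ℤ)) = _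
    rw [← hm₀]
    have h : (m₀:ℤ) - 1 - (m₀:ℤ) = -1 := by ring
    rw [h]
    norm_num
    ring
  have final : auxA d N f j * (2:ℝ)^(1 + (m₀ : ℤ))
      = (nA : ℝ) + ((auxBit d N f j k₀ : ℝ)/2 + ∑ k ∈ Q, g k) := by
    rw [hExpand, hsplit, hAint, hg0]; ring
  rw [final]
  exact aux_sigma3 nA _ (auxBit_le d N f j k₀) _ hB0 hBlt

lemma aux_minfloor (E : ℕ) (hE : 0 < E) (t : ℝ) (ht0 : 0 ≤ t) (ht1 : t ≤ 1) :
    min (⌊(E:ℝ)*t⌋.toNat) (E-1) < E ∧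
      |((min (⌊(E:ℝ)*t⌋.toNat) (E-1) : ℕ):ℝ) - (E:ℝ)*t| ≤ 1 := by
  have hu0 : 0 ≤ (E:ℝ)*t := by positivity
  have hu1 : (E:ℝ)*t ≤ E := by
    have hE' : (0:ℝ) < (E:ℝ) := by exact_mod_cast hE
    nlinarith
  have hfl0 : 0 ≤ ⌊(E:ℝ)*t⌋ := Int.floor_nonneg.2 hu0
  have hflE : ⌊(E:ℝ)*t⌋ ≤ E := by
    have := Int.floor_le_floor hu1
    simpa using this
  have hF : ((⌊(E:ℝ)*t⌋.toNat : ℕ) : ℤ) = ⌊(E:ℝ)*t⌋ := Int.toNat_of_nonneg hfl0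
  have hfloor_le : (⌊(E:ℝ)*t⌋ : ℝ) ≤ (E:ℝ)*t := Int.floor_le _
  have hlt : (E:ℝ)*t < ⌊(E:ℝ)*t⌋ + 1 := Int.lt_floor_add_one _
  by_cases hc : ⌊(E:ℝ)*t⌋.toNat ≤ E - 1
  · rw [min_eq_left hc]
    constructor
    · omega
    · rw [abs_le]
      constructor
      · have : ((⌊(E:ℝ)*t⌋.toNat : ℕ) : ℝ) = ((⌊(E:ℝ)*t⌋ : ℤ) : ℝ) := by
          exact_mod_cast congrArg (fun z : ℤ => (z:ℝ)) hF
        rw [this]; linarith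
      · have : ((⌊(E:ℝ)*t⌋.toNat : ℕ) : ℝ) = ((⌊(E:ℝ)*t⌋ : ℤ) : ℝ) := by
          exact_mod_cast congrArg (fun z : ℤ => (z:ℝ)) hF
        rw [this]; linarith
  · have hEq : ⌊(E:ℝ)*t⌋ = E := by omega
    rw [min_eq_right (by omega)]
    constructor
    · omega
    · have huE : (E:ℝ)*t = E := by
        rw [hEq] at hfloor_le
        have : ((E:ℕ):ℝ) ≤ (E:ℝ)*t := by exact_mod_cast hfloor_le
        linarith
      rw [huE]
      have h9 : ((E - 1 : ℕ) : ℝ) = (E:ℝ) - 1 := by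
        rw [Nat.cast_sub (by omega : 1 ≤ E)]
        norm_num
      rw [h9]
      norm_num

theorem stmt9 (d : ℕ) (hd : 0 < d) (α lam : ℝ) (hα : α ∈ Set.Ioc (0:ℝ) 1)
    (hlam : 0 < lam) (f : EuclideanSpace ℝ (Fin d) → ℝ)
    (hf : ∀ x ∈ unitCube d, ∀ y ∈ unitCube d, |f x - f y| ≤ lam * ‖x - y‖ ^ α)
    (N : ℕ) (hN : 0 < N) :
    ∃ a : ℕ → ℝ, (∀ j, a j ∈ Set.Ico (0:ℝ) (1/2)) ∧
      ∀ x ∈ unitCube d,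
        |(2 * modCont d f (2 * Real.sqrt d) *
            ∑ j ∈ Finset.Icc 1 N, (2:ℝ) ^ (-(j:ℤ)) *
              sigma3 (a j * (2:ℝ) ^
                (1 + ∑ i : Fin d, (2:ℤ) ^ ((i:ℕ) * N) * ⌊(2:ℝ) ^ (N - 1) * x i⌋))
          + f 0 - modCont d f (2 * Real.sqrt d)) - f x|
        ≤ 3 * lam * (2 * Real.sqrt d) ^ α * (2:ℝ) ^ (-(α * N)) := by
  obtain ⟨hα0, hα1⟩ := hα
  set ω := modCont d f (2 * Real.sqrt d) with hωdef
  have hsqd : 0 ≤ Real.sqrt d := Real.sqrt_nonneg d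
  -- cube facts
  have hcube0 : (0 : EuclideanSpace ℝ (Fin d)) ∈ unitCube d := by
    intro i
    simp [Set.mem_Icc]
  have hnorm : ∀ (u v : EuclideanSpace ℝ (Fin d)) (c : ℝ), 0 ≤ c →
      (∀ i, |u i - v i| ≤ c) → ‖u - v‖ ≤ Real.sqrt d * c := by
    intro u v c hc h
    rw [EuclideanSpace.norm_eq]
    have hsum : ∑ i, ‖(u - v) i‖^2 ≤ ∑ _i : Fin d, c^2 := by
      apply Finset.sum_le_sum
      intro i _
      have h1 := h i
      have h2 : (u - v) i = u i - v i := rfl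
      rw [h2, Real.norm_eq_abs]
      nlinarith [abs_nonneg (u i - v i)]
    have hsum2 : ∑ _i : Fin d, c^2 = (d:ℝ) * c^2 := by
      rw [Finset.sum_const, Finset.card_univ, Fintype.card_fin]
      ring
    calc Real.sqrt (∑ i, ‖(u - v) i‖^2) ≤ Real.sqrt ((d:ℝ) * c^2) := by
          apply Real.sqrt_le_sqrt
          rw [← hsum2]; exact hsum
      _ = Real.sqrt d * c := by
          rw [Real.sqrt_mul (by positivity), Real.sqrt_sq hc]
  -- sup bounds
  have hub : ∀ t ∈ {t | ∃ x ∈ unitCube d, ∃ y ∈ unitCube d,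
      ‖x - y‖ ≤ 2 * Real.sqrt d ∧ t = |f x - f y|}, t ≤ lam * (2 * Real.sqrt d) ^ α := by
    rintro t ⟨u, hu, v, hv, hnuv, rfl⟩
    calc |f u - f v| ≤ lam * ‖u - v‖ ^ α := hf u hu v hv
      _ ≤ lam * (2 * Real.sqrt d) ^ α := by
          apply mul_le_mul_of_nonneg_left _ (le_of_lt hlam)
          exact Real.rpow_le_rpow (norm_nonneg _) hnuv (le_of_lt hα0)
  have hBdd : BddAbove {t | ∃ x ∈ unitCube d, ∃ y ∈ unitCube d,
      ‖x - y‖ ≤ 2 * Real.sqrt d ∧ t = |f x - f y|} := ⟨_, hub⟩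
  have hωmem : ∀ u ∈ unitCube d, ∀ v ∈ unitCube d, |f u - f v| ≤ ω := by
    intro u hu v hv
    apply le_csSup hBdd
    refine ⟨u, hu, v, hv, ?_, rfl⟩
    have h1 : ∀ i, |u i - v i| ≤ 1 := by
      intro i
      have := hu i; have := hv i
      rw [Set.mem_Icc] at *
      rw [abs_le]
      constructor <;> linarith [(hu i).1, (hu i).2, (hv i).1, (hv i).2]
    calc ‖u - v‖ ≤ Real.sqrt d * 1 := hnorm u v 1 zero_le_one h1
      _ ≤ 2 * Real.sqrt d := by linarith
  have hω0 : 0 ≤ ω := by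
    have := hωmem 0 hcube0 0 hcube0
    simpa using this
  have hωle : ω ≤ lam * (2 * Real.sqrt d) ^ α := by
    have hne : Set.Nonempty {t | ∃ x ∈ unitCube d, ∃ y ∈ unitCube d,
        ‖x - y‖ ≤ 2 * Real.sqrt d ∧ t = |f x - f y|} :=
      ⟨|f 0 - f 0|, 0, hcube0, 0, hcube0, by simp, rfl⟩
    exact csSup_le hne hub
  have hRHS : (0:ℝ) ≤ 3 * lam * (2 * Real.sqrt d) ^ α * (2:ℝ) ^ (-(α * N)) := by
    have h1 : (0:ℝ) ≤ (2 * Real.sqrt d) ^ α := Real.rpow_nonneg (by positivity) α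
    have h2 : (0:ℝ) < (2:ℝ) ^ (-(α * N)) := Real.rpow_pos_of_pos (by norm_num) _
    positivity
  by_cases hωz : ω = 0
  · -- constant function case
    refine ⟨fun _ => 0, fun j => by norm_num, ?_⟩
    intro x hx
    have hσ0 : ∀ j ∈ Finset.Icc 1 N, (2:ℝ) ^ (-(j:ℤ)) *
        sigma3 ((0:ℝ) * (2:ℝ) ^
          (1 + ∑ i : Fin d, (2:ℤ) ^ ((i:ℕ) * N) * ⌊(2:ℝ) ^ (N - 1) * x i⌋)) = 0 := by
      intro j _
      have h0 : sigma3 (0:ℝ) = 0 := by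
        unfold sigma3
        rw [Int.fract_zero]
        norm_num
      rw [zero_mul, h0, mul_zero]
    rw [Finset.sum_congr rfl hσ0]
    have hfx := hωmem 0 hcube0 x hx
    rw [hωz] at hfx ⊢
    simp only [Finset.sum_const_zero, mul_zero, zero_add, sub_zero]
    calc |f 0 - f x| ≤ 0 := hfx
      _ ≤ _ := hRHS
  · have hωpos : 0 < ω := lt_of_le_of_ne hω0 (Ne.symm hωz)
    refine ⟨auxA d N f, fun j => auxA_mem d N hN f j, ?_⟩
    intro x hx
    -- the cell of x
    have hflb : ∀ i : Fin d, 0 ≤ ⌊(2:ℝ) ^ (N - 1) * x i⌋ ∧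
        ⌊(2:ℝ) ^ (N - 1) * x i⌋ ≤ ((2^(N-1) : ℕ) : ℤ) := by
      intro i
      have hxi := hx i
      rw [Set.mem_Icc] at hxi
      constructor
      · apply Int.floor_nonneg.2
        exact mul_nonneg (by positivity) hxi.1
      · have h1 : (2:ℝ) ^ (N - 1) * x i ≤ (2:ℝ)^(N-1) := by
          nlinarith [pow_pos (by norm_num : (0:ℝ) < 2) (N-1)]
        have h3 := Int.floor_le_floor h1
        have h2 : ⌊((2:ℝ))^(N-1)⌋ = ((2^(N-1) : ℕ) : ℤ) := by
          rw [show ((2:ℝ))^(N-1) = ((2^(N-1) : ℕ) : ℝ) by push_cast; ring]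
          exact Int.floor_natCast _
        rw [h2] at h3
        exact h3
    set k₀ : Fin d → Fin (2^(N-1)+1) :=
      fun i => ⟨(⌊(2:ℝ) ^ (N - 1) * x i⌋).toNat, by
        have := hflb i; omega⟩ with hk₀
    have hfl : ∀ i, ⌊(2:ℝ) ^ (N - 1) * x i⌋ = ((k₀ i : ℕ) : ℤ) := by
      intro i
      rw [hk₀]
      exact (Int.toNat_of_nonneg (hflb i).1).symm
    have hexp : (1 + ∑ i : Fin d, (2:ℤ) ^ ((i:ℕ) * N) * ⌊(2:ℝ) ^ (N - 1) * x i⌋)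
        = 1 + (auxM d N k₀ : ℤ) := by
      congr 1
      rw [show ((auxM d N k₀ : ℕ):ℤ) = ∑ i : Fin d, ((k₀ i : ℕ):ℤ) * 2^((i:ℕ)*N) by
        unfold auxM; push_cast; rfl]
      apply Finset.sum_congr rfl
      intro i _
      rw [hfl i]
      ring
    -- t and its bounds
    set t : ℝ := (f (auxCorner d N k₀) - f 0 + ω) / (2 * ω) with htdef
    have hcorner_mem : auxCorner d N k₀ ∈ unitCube d := by
      intro i
      have h1 : auxCorner d N k₀ i = ((k₀ i : ℕ) : ℝ) / 2^(N-1) := rfl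
      rw [h1, Set.mem_Icc]
      have h2 : ((k₀ i : ℕ) : ℝ) ≤ 2^(N-1) := by
        have : (k₀ i : ℕ) ≤ 2^(N-1) := by omega
        exact_mod_cast this
      have h3 : (0:ℝ) < 2^(N-1) := by positivity
      constructor
      · positivity
      · rw [div_le_one h3]; exact h2
    have hcω := hωmem (auxCorner d N k₀) hcorner_mem 0 hcube0
    have ht0 : 0 ≤ t := by
      rw [htdef]
      apply div_nonneg _ (by linarith)
      have := abs_le.1 hcω
      linarith [this.1]
    have ht1 : t ≤ 1 := by
      rw [htdef, div_le_one (by linarith)]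
      have := abs_le.1 hcω
      linarith [this.2]
    -- auxS properties
    have hSdef : auxS d N f k₀ = min (⌊((2^N : ℕ):ℝ) * t⌋.toNat) (2^N - 1) := by
      unfold auxS
      rw [← hωdef, ← htdef]
      congr 2
      push_cast
      ring
    have hmf := aux_minfloor (2^N) (by positivity) t ht0 ht1
    have hSlt : auxS d N f k₀ < 2^N := by rw [hSdef]; exact hmf.1
    have hSapprox : |((auxS d N f k₀ : ℕ):ℝ) - ((2^N : ℕ):ℝ) * t| ≤ 1 := by
      rw [hSdef]; exact hmf.2
    -- the sum
    have hsum : ∑ j ∈ Finset.Icc 1 N, (2:ℝ) ^ (-(j:ℤ)) *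
        sigma3 (auxA d N f j * (2:ℝ) ^
          (1 + ∑ i : Fin d, (2:ℤ) ^ ((i:ℕ) * N) * ⌊(2:ℝ) ^ (N - 1) * x i⌋))
        = ((auxS d N f k₀ : ℕ):ℝ) / 2^N := by
      rw [Finset.sum_congr rfl (fun j hj => by rw [hexp, auxSigma d N hN f j k₀])]
      exact aux_sum_bits N (auxS d N f k₀) hN hSlt
    rw [hsum]
    -- main estimate
    have h2ωt : 2 * ω * t = f (auxCorner d N k₀) - f 0 + ω := by
      rw [htdef]
      field_simp
    have hEpos : (0:ℝ) < (2:ℝ)^N := by positivity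
    have hkey : 2 * ω * (((auxS d N f k₀ : ℕ):ℝ) / 2^N) + f 0 - ω - f x
        = 2 * ω * (((auxS d N f k₀ : ℕ):ℝ) / 2^N - t) + (f (auxCorner d N k₀) - f x) := by
      linear_combination h2ωt
    have hstep1 : |2 * ω * (((auxS d N f k₀ : ℕ):ℝ) / 2^N) + f 0 - ω - f x|
        ≤ 2 * ω * ((2:ℝ)^N)⁻¹ + lam * ‖auxCorner d N k₀ - x‖ ^ α := by
      rw [hkey]
      calc |2 * ω * (((auxS d N f k₀ : ℕ):ℝ) / 2^N - t) + (f (auxCorner d N k₀) - f x)|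
          ≤ |2 * ω * (((auxS d N f k₀ : ℕ):ℝ) / 2^N - t)| + |f (auxCorner d N k₀) - f x| :=
            abs_add_le _ _
        _ ≤ 2 * ω * ((2:ℝ)^N)⁻¹ + lam * ‖auxCorner d N k₀ - x‖ ^ α := by
            apply add_le_add
            · rw [abs_mul, abs_of_nonneg (by linarith : (0:ℝ) ≤ 2 * ω)]
              apply mul_le_mul_of_nonneg_left _ (by linarith)
              have hdiv : |((auxS d N f k₀ : ℕ):ℝ) / 2^N - t|
                  = |((auxS d N f k₀ : ℕ):ℝ) - ((2^N:ℕ):ℝ) * t| / (2:ℝ)^N := by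
                rw [← abs_of_pos hEpos, ← abs_div]
                congr 1
                push_cast
                field_simp
                rw [abs_of_pos hEpos]
              rw [hdiv, div_le_iff₀ hEpos, inv_mul_cancel₀ (ne_of_gt hEpos)]
              exact hSapprox
            · exact hf (auxCorner d N k₀) hcorner_mem x hx
    -- distance bound
    have hdistc : ∀ i, |auxCorner d N k₀ i - x i| ≤ ((2:ℝ)^(N-1))⁻¹ := by
      intro i
      have h1 : auxCorner d N k₀ i = ((k₀ i : ℕ) : ℝ) / 2^(N-1) := rfl
      have hpow : (0:ℝ) < (2:ℝ)^(N-1) := by positivity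
      rw [h1]
      have hfli := hfl i
      have hle : (⌊(2:ℝ) ^ (N - 1) * x i⌋ : ℝ) ≤ (2:ℝ)^(N-1) * x i := Int.floor_le _
      have hgt : (2:ℝ)^(N-1) * x i < ⌊(2:ℝ) ^ (N - 1) * x i⌋ + 1 := Int.lt_floor_add_one _
      have hcast : (((k₀ i : ℕ)):ℝ) = ((⌊(2:ℝ) ^ (N - 1) * x i⌋ : ℤ) : ℝ) := by
        exact_mod_cast congrArg (fun z : ℤ => (z:ℝ)) hfli.symm
      have heq : ((k₀ i : ℕ) : ℝ) / 2^(N-1) - x i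
          = (((k₀ i : ℕ) : ℝ) - 2^(N-1) * x i) / 2^(N-1) := by
        field_simp
      have habs : |((k₀ i : ℕ):ℝ) - 2^(N-1)*x i| ≤ 1 := by
        rw [hcast, abs_le]
        constructor <;> linarith
      rw [heq, abs_div, abs_of_pos hpow, div_le_iff₀ hpow,
        inv_mul_cancel₀ (ne_of_gt hpow)]
      exact habs
    have hdist : ‖auxCorner d N k₀ - x‖ ≤ 2 * Real.sqrt d * ((2:ℝ)^N)⁻¹ := by
      have := hnorm (auxCorner d N k₀) x (((2:ℝ)^(N-1))⁻¹) (by positivity) hdistc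
      have hNeq : (2:ℝ)^N = 2 * (2:ℝ)^(N-1) := by
        rw [← pow_succ']
        congr 1
        omega
      calc ‖auxCorner d N k₀ - x‖ ≤ Real.sqrt d * ((2:ℝ)^(N-1))⁻¹ := this
        _ = 2 * Real.sqrt d * ((2:ℝ)^N)⁻¹ := by
            rw [hNeq]
            field_simp
    -- rpow computations
    have hrp1 : ((2:ℝ)^N)⁻¹ = (2:ℝ) ^ (-(N:ℝ)) := by
      rw [Real.rpow_neg (by norm_num), Real.rpow_natCast]
    have hrp2 : (2:ℝ) ^ (-(α * N)) = ((2:ℝ) ^ (-(N:ℝ))) ^ α := by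
      rw [← Real.rpow_mul (by norm_num : (0:ℝ) ≤ 2)]
      congr 1
      ring
    have hrp3 : lam * ‖auxCorner d N k₀ - x‖ ^ α
        ≤ lam * (2 * Real.sqrt d) ^ α * (2:ℝ) ^ (-(α * N)) := by
      have h1 : ‖auxCorner d N k₀ - x‖ ^ α ≤ (2 * Real.sqrt d * ((2:ℝ)^N)⁻¹) ^ α :=
        Real.rpow_le_rpow (norm_nonneg _) hdist (le_of_lt hα0)
      have h2 : (2 * Real.sqrt d * ((2:ℝ)^N)⁻¹) ^ α
          = (2 * Real.sqrt d) ^ α * (2:ℝ) ^ (-(α * N)) := by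
        rw [Real.mul_rpow (by positivity) (by positivity), hrp1, ← hrp2]
      calc lam * ‖auxCorner d N k₀ - x‖ ^ α ≤ lam * (2 * Real.sqrt d * ((2:ℝ)^N)⁻¹) ^ α :=
            mul_le_mul_of_nonneg_left h1 (le_of_lt hlam)
        _ = lam * (2 * Real.sqrt d) ^ α * (2:ℝ) ^ (-(α * N)) := by rw [h2]; ring
    have hrp4 : 2 * ω * ((2:ℝ)^N)⁻¹ ≤ 2 * (lam * (2 * Real.sqrt d) ^ α) * (2:ℝ) ^ (-(α * N)) := by
      have h1 : ((2:ℝ)^N)⁻¹ ≤ (2:ℝ) ^ (-(α * N)) := by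
        rw [hrp1]
        apply Real.rpow_le_rpow_left_iff (by norm_num : (1:ℝ) < 2) |>.2
        have : α * N ≤ N := by nlinarith [Nat.cast_nonneg (α := ℝ) N]
        linarith
      have h2 : (0:ℝ) < ((2:ℝ)^N)⁻¹ := by positivity
      have h3 : 0 ≤ lam * (2 * Real.sqrt d) ^ α := by
        have := Real.rpow_nonneg (by positivity : (0:ℝ) ≤ 2 * Real.sqrt d) α
        positivity
      calc 2 * ω * ((2:ℝ)^N)⁻¹ ≤ 2 * (lam * (2 * Real.sqrt d) ^ α) * ((2:ℝ)^N)⁻¹ := by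
            apply mul_le_mul_of_nonneg_right _ (le_of_lt h2)
            linarith
        _ ≤ 2 * (lam * (2 * Real.sqrt d) ^ α) * (2:ℝ) ^ (-(α * N)) := by
            apply mul_le_mul_of_nonneg_left h1
            linarith
    calc |2 * ω * (((auxS d N f k₀ : ℕ):ℝ) / 2^N) + f 0 - ω - f x|
        ≤ 2 * ω * ((2:ℝ)^N)⁻¹ + lam * ‖auxCorner d N k₀ - x‖ ^ α := hstep1
      _ ≤ 2 * (lam * (2 * Real.sqrt d) ^ α) * (2:ℝ) ^ (-(α * N))
          + lam * (2 * Real.sqrt d) ^ α * (2:ℝ) ^ (-(α * N)) := add_le_add hrp4 hrp3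
      _ = 3 * lam * (2 * Real.sqrt d) ^ α * (2:ℝ) ^ (-(α * N)) := by ring
end

section
/- The family of functions {x ↦ σ₃(a·x) : a ∈ ℝ} on ℝ shatters sets of arbitrary finite size: for every m and every assignment θ₁,...,θ_m ∈ {0,1}, there exists a ∈ ℝ such that σ₃(a·2^k) = θ_k for all k ∈ {1,...,m}. Hence the VC-dimension of this family is infinite. -/
lemma geomT (k : ℕ) : ∀ m, k ≤ m →
    ∑ j ∈ Finset.Icc (k+1) m, (2:ℝ)^((k:ℤ)-j-1) ≤ 1/2 - (2:ℝ)^((k:ℤ)-m-1) := by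
  intro m hm
  induction m, hm using Nat.le_induction with
  | base =>
      rw [Finset.Icc_eq_empty (by omega)]
      have : ((k:ℤ) - k - 1) = -1 := by ring
      rw [Finset.sum_empty, this]
      norm_num
  | succ n hn ih =>
      rw [Finset.sum_Icc_succ_top (by omega : k + 1 ≤ n + 1)]
      have h1 : ((k:ℤ) - (↑(n+1):ℤ) - 1) = ((k:ℤ) - n - 1) - 1 := by push_cast; ring
      have h2 : (2:ℝ)^((k:ℤ) - n - 1) = 2 * (2:ℝ)^(((k:ℤ) - n - 1) - 1) := by
        have he : (k:ℤ) - n - 1 = ((k:ℤ) - n - 1 - 1) + 1 := by ring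
        rw [he, zpow_add_one₀ two_ne_zero]; ring
      have h3 : (0:ℝ) < (2:ℝ)^(((k:ℤ) - n - 1) - 1) := by positivity
      rw [h1]
      linarith

/-- The family {x ↦ σ₃(a·x) : a ∈ ℝ} shatters the points 2¹, …, 2^m for every m:
it realizes every dichotomy, hence has infinite VC-dimension. -/
theorem stmt13 (m : ℕ) (θ : ℕ → ℝ) (hθ : ∀ k, θ k ∈ ({0, 1} : Set ℝ)) :
    ∃ a : ℝ, ∀ k ∈ Finset.Icc 1 m, sigma3 (a * (2:ℝ) ^ k) = θ k := by
  classical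
  have hθ' : ∀ k, θ k = 0 ∨ θ k = 1 := by
    intro k; have := hθ k; simpa [Set.mem_insert_iff] using this
  refine ⟨∑ j ∈ Finset.Icc 1 m, θ j * (2:ℝ)^(-(j:ℤ)-1), ?_⟩
  intro k hk
  obtain ⟨hk1, hkm⟩ := Finset.mem_Icc.mp hk
  have h2 : (2:ℝ) ≠ 0 := two_ne_zero
  have ha : (∑ j ∈ Finset.Icc 1 m, θ j * (2:ℝ)^(-(j:ℤ)-1)) * (2:ℝ)^k
      = ∑ j ∈ Finset.Icc 1 m, θ j * (2:ℝ)^((k:ℤ)-j-1) := by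
    rw [Finset.sum_mul]
    refine Finset.sum_congr rfl fun j _ => ?_
    rw [mul_assoc, ← zpow_natCast (2:ℝ) k, ← zpow_add₀ h2]
    ring_nf
  have hsplit : Finset.Icc 1 m = Finset.Ico 1 k ∪ Finset.Icc k m := by
    ext a
    simp only [Finset.mem_Icc, Finset.mem_union, Finset.mem_Ico]
    omega
  have hdisj : Disjoint (Finset.Ico 1 k) (Finset.Icc k m) := by
    rw [Finset.disjoint_left]
    intro a haa hab
    simp only [Finset.mem_Ico, Finset.mem_Icc] at haa hab
    omega
  set N : ℤ := ∑ j ∈ Finset.Ico 1 k, if θ j = 1 then (2:ℤ)^(k-j-1) else 0 with hN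
  have hP : ∑ j ∈ Finset.Ico 1 k, θ j * (2:ℝ)^((k:ℤ)-j-1) = (N:ℝ) := by
    rw [hN]
    push_cast
    refine Finset.sum_congr rfl fun j hj => ?_
    have hjk : j < k := (Finset.mem_Ico.mp hj).2
    have hc : ((k - j - 1 : ℕ) : ℤ) = (k:ℤ) - j - 1 := by omega
    rcases hθ' j with h | h
    · simp [h]
    · rw [h, if_pos rfl, one_mul, ← zpow_natCast (2:ℝ) (k-j-1), hc]
  set t : ℝ := ∑ j ∈ Finset.Icc (k+1) m, θ j * (2:ℝ)^((k:ℤ)-j-1) with ht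
  have ht0 : 0 ≤ t := by
    apply Finset.sum_nonneg
    intro j _
    rcases hθ' j with h | h <;> simp [h] <;> positivity
  have ht1 : t < 1/2 := by
    have hle : t ≤ ∑ j ∈ Finset.Icc (k+1) m, (2:ℝ)^((k:ℤ)-j-1) := by
      apply Finset.sum_le_sum
      intro j _
      have hp : (0:ℝ) < (2:ℝ)^((k:ℤ)-j-1) := by positivity
      rcases hθ' j with h | h <;> simp [h] <;> positivity
    have := geomT k m hkm
    have hp : (0:ℝ) < (2:ℝ)^((k:ℤ)-m-1) := by positivity
    linarith
  have hIcc : Finset.Icc k m = insert k (Finset.Icc (k+1) m) := by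
    ext a
    simp only [Finset.mem_Icc, Finset.mem_insert]
    omega
  have hkmem : k ∉ Finset.Icc (k+1) m := by simp
  have hhalf : (2:ℝ)^((k:ℤ)-k-1) = 1/2 := by
    have : ((k:ℤ) - k - 1) = -1 := by ring
    rw [this]; norm_num
  have hr : ∑ j ∈ Finset.Icc k m, θ j * (2:ℝ)^((k:ℤ)-j-1) = θ k * (1/2) + t := by
    rw [hIcc, Finset.sum_insert hkmem, hhalf, ht]
  have hfr : Int.fract ((∑ j ∈ Finset.Icc 1 m, θ j * (2:ℝ)^(-(j:ℤ)-1)) * (2:ℝ)^k)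
      = θ k * (1/2) + t := by
    rw [ha, hsplit, Finset.sum_union hdisj, hP, hr, Int.fract_intCast_add]
    apply Int.fract_eq_self.mpr
    rcases hθ' k with h | h <;> rw [h] <;> constructor <;> nlinarith
  rcases hθ' k with h | h
  · rw [sigma3, hfr, h, if_neg (by nlinarith)]
  · rw [sigma3, hfr, h, if_pos (by nlinarith)]
end

section
/- The family {x ↦ cos(a·x) : a ∈ ℝ} of functions on ℝ, thresholded by T(t) = 1_{t ≥ 0}, has infinite VC-dimension: for every m there exist points x₁,...,x_m ∈ ℝ shattered by {x ↦ T(cos(ax)) : a ∈ ℝ}. -/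
/-- The family {x ↦ 1_{cos(ax) ≥ 0} : a ∈ ℝ} has infinite VC-dimension: for every m
there are m points shattered by it. -/
theorem stmt14 (m : ℕ) :
    ∃ x : Fin m → ℝ, ∀ θ : Fin m → ℝ, (∀ i, θ i ∈ ({0, 1} : Set ℝ)) →
      ∃ a : ℝ, ∀ i, (if 0 ≤ Real.cos (a * x i) then (1:ℝ) else 0) = θ i := by
  refine ⟨fun i => Real.pi / 4 ^ (i : ℕ), fun θ hθ => ?_⟩
  set d : Fin m → ℕ := fun j => if θ j = 0 then 1 else 0 with hd
  refine ⟨∑ j : Fin m, (d j : ℝ) * 4 ^ (j : ℕ), fun i => ?_⟩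
  -- split the sum
  have hsplit : (∑ j : Fin m, (d j : ℝ) * 4 ^ (j : ℕ))
      = (∑ j ∈ Finset.univ.filter (fun j : Fin m => (j : ℕ) < (i : ℕ)), (d j : ℝ) * 4 ^ (j : ℕ))
        + (d i : ℝ) * 4 ^ (i : ℕ)
        + (∑ j ∈ Finset.univ.filter (fun j : Fin m => (i : ℕ) < (j : ℕ)), (d j : ℝ) * 4 ^ (j : ℕ)) := by
    rw [← Finset.sum_filter_add_sum_filter_not Finset.univ (fun j : Fin m => (j : ℕ) < (i : ℕ))]
    have heq : (Finset.univ.filter (fun j : Fin m => ¬ (j : ℕ) < (i : ℕ)))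
        = insert i (Finset.univ.filter (fun j : Fin m => (i : ℕ) < (j : ℕ))) := by
      ext j
      simp only [Finset.mem_filter, Finset.mem_univ, true_and, Finset.mem_insert, not_lt]
      constructor
      · intro h
        rcases lt_or_eq_of_le h with h | h
        · exact Or.inr h
        · exact Or.inl (Fin.ext h.symm)
      · rintro (rfl | h)
        · exact le_refl _
        · exact h.le
    rw [heq, Finset.sum_insert (by simp)]
    ring
  set A : ℝ := ∑ j ∈ Finset.univ.filter (fun j : Fin m => (j : ℕ) < (i : ℕ)), (d j : ℝ) * 4 ^ (j : ℕ) with hA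
  set B : ℝ := ∑ j ∈ Finset.univ.filter (fun j : Fin m => (i : ℕ) < (j : ℕ)), (d j : ℝ) * 4 ^ (j : ℕ) with hB
  set r : ℝ := A / 4 ^ (i : ℕ) with hr
  set k : ℕ := ∑ j ∈ Finset.univ.filter (fun j : Fin m => (i : ℕ) < (j : ℕ)), d j * 2 * 4 ^ ((j : ℕ) - (i : ℕ) - 1) with hk
  have h4 : (0:ℝ) < 4 ^ (i : ℕ) := by positivity
  have hbig : B = 2 * (k : ℝ) * 4 ^ (i : ℕ) := by
    rw [hB, hk]
    push_cast
    rw [Finset.mul_sum, Finset.sum_mul]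
    refine Finset.sum_congr rfl fun j hj => ?_
    simp only [Finset.mem_filter] at hj
    have hij : (i : ℕ) < (j : ℕ) := by
      simpa using hj.2
    have h1 : (j : ℕ) - (i : ℕ) - 1 + 1 + (i : ℕ) = (j : ℕ) := by omega
    have h2 : (4:ℝ) ^ ((j : ℕ) - (i : ℕ) - 1) * 4 * 4 ^ (i : ℕ) = 4 ^ (j : ℕ) := by
      rw [← pow_succ, ← pow_add, h1]
    nlinarith [h2]
  have hax : (∑ j : Fin m, (d j : ℝ) * 4 ^ (j : ℕ)) * (Real.pi / 4 ^ (i : ℕ))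
      = (r * Real.pi + (d i : ℝ) * Real.pi) + ((k : ℤ) : ℝ) * (2 * Real.pi) := by
    rw [hsplit, hbig, hr, Int.cast_natCast]
    field_simp
  have hr0 : 0 ≤ r := by
    rw [hr]
    apply div_nonneg _ h4.le
    apply Finset.sum_nonneg
    intro j _
    positivity
  have hr3 : r ≤ 1/3 := by
    rw [hr, div_le_iff₀ h4]
    have hb : A ≤ ∑ j ∈ Finset.univ.filter (fun j : Fin m => (j : ℕ) < (i : ℕ)), (4:ℝ) ^ (j : ℕ) := by
      apply Finset.sum_le_sum
      intro j _
      have : (d j : ℝ) ≤ 1 := by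
        rw [hd]; dsimp only; split <;> norm_num
      nlinarith [pow_pos (show (0:ℝ) < 4 by norm_num) (j : ℕ)]
    have himg : (∑ j ∈ Finset.univ.filter (fun j : Fin m => (j : ℕ) < (i : ℕ)), (4:ℝ) ^ (j : ℕ))
        = ∑ n ∈ (Finset.univ.filter (fun j : Fin m => (j : ℕ) < (i : ℕ))).image (fun j : Fin m => (j : ℕ)), (4:ℝ) ^ n := by
      rw [Finset.sum_image]
      intro a _ b _ h
      exact Fin.ext h
    have hsub : (Finset.univ.filter (fun j : Fin m => (j : ℕ) < (i : ℕ))).image (fun j : Fin m => (j : ℕ))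
        ⊆ Finset.range (i : ℕ) := by
      intro n hn
      simp only [Finset.mem_image, Finset.mem_filter, Finset.mem_univ, true_and] at hn
      obtain ⟨j, hj, rfl⟩ := hn
      simpa using hj
    have hb2 : (∑ n ∈ (Finset.univ.filter (fun j : Fin m => (j : ℕ) < (i : ℕ))).image (fun j : Fin m => (j : ℕ)), (4:ℝ) ^ n)
        ≤ ∑ n ∈ Finset.range (i : ℕ), (4:ℝ) ^ n := by
      apply Finset.sum_le_sum_of_subset_of_nonneg hsub
      intro n _ _
      positivity
    have hgeo : (∑ n ∈ Finset.range (i : ℕ), (4:ℝ) ^ n) = (4 ^ (i:ℕ) - 1) / 3 := by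
      rw [geom_sum_eq (by norm_num)]; norm_num
    nlinarith [hb, hb2, hgeo, h4, himg]
  have hcosr : 0 < Real.cos (r * Real.pi) := by
    apply Real.cos_pos_of_mem_Ioo
    constructor
    · nlinarith [Real.pi_pos]
    · nlinarith [Real.pi_pos]
  rcases hθ i with h0 | h1
  · -- θ i = 0, d i = 1
    have hdi : (d i : ℝ) = 1 := by rw [hd]; simp [h0]
    rw [hax, hdi]
    have hc : Real.cos (r * Real.pi + 1 * Real.pi + (k : ℤ) * (2 * Real.pi)) = - Real.cos (r * Real.pi) := by
      rw [Real.cos_add_int_mul_two_pi, one_mul, Real.cos_add_pi]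
    rw [add_assoc] at hc ⊢
    rw [← add_assoc] at hc ⊢
    rw [hc, if_neg (by linarith)]
    exact h0.symm
  · -- θ i = 1, d i = 0
    simp only [Set.mem_singleton_iff] at h1
    have hdi : (d i : ℝ) = 0 := by
      rw [hd]; simp only
      rw [if_neg (by rw [h1]; norm_num)]
      norm_num
    rw [hax, hdi]
    have hc : Real.cos (r * Real.pi + 0 * Real.pi + (k : ℤ) * (2 * Real.pi)) = Real.cos (r * Real.pi) := by
      rw [Real.cos_add_int_mul_two_pi, zero_mul, add_zero]
    rw [hc, if_pos hcosr.le]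
    exact h1.symm
end
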